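/- Suppose f : Γ → ℝ is differentiable concave with f_ℓ > 0, Γ ⊂ ℝ^{n+1} an open convex cone containing 𝟏, f(𝟏) > 0, and f satisfies the condition ∑_{ℓ=1}^{n+1} f_ℓ(λ) λ_ℓ ≥ −K₀(1 + ∑_{ℓ=1}^{n+1} f_ℓ(λ)) for all λ ∈ Γ and some constant K₀ ≥ 0. Write λ = (λ₁,…,λ_n, λ_{n+1}) and f_τ = f_{n+1}. Then for any index 1 ≤ r ≤ n and any ε > 0, ∑_{i=1}^{n} f_i(λ)|λ_i| ≤ ε ∑_{i ≠ r, i ≤ n} f_i(λ) λ_i² + C(1 + ∑_{i=1}^{n} f_i(λ) + f_τ(λ)), where C depends only on ε, K₀, |λ_{n+1}|, and an upper bound for f(λ). -/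

import Mathlib

open Filter Topology

lemma concave_support {E : Type*} [NormedAddCommGroup E] [NormedSpace ℝ E]
    {Γ : Set E} {f : E → ℝ} (hconc : ConcaveOn ℝ Γ f)
    {a b : E} (ha : a ∈ Γ) (hb : b ∈ Γ) (hd : DifferentiableAt ℝ f a) :
    f b ≤ f a + fderiv ℝ f a (b - a) := by
  set g : ℝ → ℝ := fun t => f (a + t • (b - a)) with hgdef
  have hg : HasDerivAt g (fderiv ℝ f a (b - a)) 0 := by
    have h1 : HasDerivAt (fun t : ℝ => a + t • (b - a)) (b - a) 0 := by
      simpa using ((hasDerivAt_id (0:ℝ)).smul_const (b - a)).const_add a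
    have h2 : HasFDerivAt f (fderiv ℝ f a) (a + (0:ℝ) • (b - a)) := by
      simpa using hd.hasFDerivAt
    exact h2.comp_hasDerivAt 0 h1
  have htend : Tendsto (slope g 0) (𝓝[>] 0) (𝓝 (fderiv ℝ f a (b - a))) :=
    (hasDerivAt_iff_tendsto_slope.1 hg).mono_left
      (nhdsWithin_mono _ (fun t ht => ne_of_gt ht))
  have hslope : ∀ t : ℝ, t ∈ Set.Ioc (0:ℝ) 1 → f b - f a ≤ slope g 0 t := by
    intro t ht
    have hmem : (1 - t) • a + t • b ∈ Γ := hconc.1 ha hb (by linarith [ht.2]) ht.1.le (by ring)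
    have hcc : (1 - t) * f a + t * f b ≤ f ((1 - t) • a + t • b) :=
      hconc.2 ha hb (by linarith [ht.2]) ht.1.le (by ring)
    have heq : a + t • (b - a) = (1 - t) • a + t • b := by module
    have : (1 - t) * f a + t * f b ≤ g t := by rw [hgdef]; simp only [heq]; exact hcc
    have hg0 : g 0 = f a := by simp [hgdef]
    have ht0 : (0:ℝ) < t := ht.1
    rw [slope_def_field, sub_zero, le_div_iff₀ ht0]
    nlinarith
  have : f b - f a ≤ fderiv ℝ f a (b - a) := by
    refine ge_of_tendsto htend ?_
    filter_upwards [Ioc_mem_nhdsGT one_pos] with t ht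
    exact hslope t ht
  linarith

/-- Proposition 2.4 of the paper: under concavity, positivity of the partials
and the lower bound `∑ f_ℓ(λ) λ_ℓ ≥ −K₀(1 + ∑ f_ℓ(λ))`, for any `ε > 0` and any bound `B`
on `|λ_{n+1}|` and `f(λ)` there is a constant `C = C(ε, K₀, B)` such that for every index
`1 ≤ r ≤ n`:
`∑_{i ≤ n} f_i|λ_i| ≤ ε ∑_{i ≠ r, i ≤ n} f_i λ_i² + C (1 + ∑_{i ≤ n} f_i + f_τ)`. -/
theorem stmt5 (n : ℕ) (Γ : Set (Fin (n + 1) → ℝ)) (f : (Fin (n + 1) → ℝ) → ℝ)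
    (hopen : IsOpen Γ) (hconv : Convex ℝ Γ)
    (hcone : ∀ t : ℝ, 0 < t → ∀ lam ∈ Γ, t • lam ∈ Γ)
    (hone : (fun _ : Fin (n + 1) => (1 : ℝ)) ∈ Γ)
    (hdiff : ∀ lam ∈ Γ, DifferentiableAt ℝ f lam)
    (hconc : ConcaveOn ℝ Γ f)
    (hmono : ∀ lam ∈ Γ, ∀ ℓ, 0 < fderiv ℝ f lam (Pi.single ℓ 1))
    (hf1 : 0 < f (fun _ => (1 : ℝ)))
    (K₀ : ℝ) (hK₀ : 0 ≤ K₀)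
    (hK : ∀ lam ∈ Γ, -K₀ * (1 + ∑ ℓ, fderiv ℝ f lam (Pi.single ℓ 1)) ≤
      ∑ ℓ, fderiv ℝ f lam (Pi.single ℓ 1) * lam ℓ)
    (ε B : ℝ) (hε : 0 < ε) (hB : 0 ≤ B) :
    ∃ C : ℝ, 0 < C ∧ ∀ lam ∈ Γ, |lam (Fin.last n)| ≤ B → f lam ≤ B → ∀ r : Fin n,
      ∑ i : Fin n, fderiv ℝ f lam (Pi.single i.castSucc 1) * |lam i.castSucc| ≤
        ε * ∑ i ∈ Finset.univ.filter (fun i : Fin n => i ≠ r),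
            fderiv ℝ f lam (Pi.single i.castSucc 1) * lam i.castSucc ^ 2 +
          C * (1 + ∑ i : Fin n, fderiv ℝ f lam (Pi.single i.castSucc 1) +
            fderiv ℝ f lam (Pi.single (Fin.last n) 1)) := by
  -- elementary AM-GM fact
  have hgen : ∀ y : ℝ, 0 ≤ y → y ≤ ε / 3 * y ^ 2 + 3 / (4 * ε) := by
    intro y hy
    have key : ε / 3 * y ^ 2 + 3 / (4 * ε) - y = (2 * ε * y - 3) ^ 2 / (12 * ε) := by
      field_simp
      ring
    nlinarith [div_nonneg (sq_nonneg (2 * ε * y - 3)) (by linarith : (0:ℝ) ≤ 12 * ε)]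
  refine ⟨3 * (3 / (4 * ε)) + K₀ + 2 * B + 2, by positivity, ?_⟩
  intro lam hlam hlast hfB r
  obtain ⟨F, hFdef⟩ : ∃ F : Fin (n + 1) → ℝ,
      F = fun ℓ => fderiv ℝ f lam (Pi.single ℓ 1) := ⟨_, rfl⟩
  have hgoaleq : ∀ w : Fin (n + 1), fderiv ℝ f lam (Pi.single w 1) = F w := by
    intro w; rw [hFdef]
  simp only [hgoaleq]
  -- linearity of the differential
  have hT : ∀ v : Fin (n + 1) → ℝ, fderiv ℝ f lam v = ∑ ℓ, F ℓ * v ℓ := by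
    intro v
    have hv : v = ∑ ℓ, v ℓ • (Pi.single ℓ 1 : Fin (n + 1) → ℝ) := by
      funext j
      simp [Finset.sum_apply, Pi.single_apply, mul_ite]
    conv_lhs => rw [hv]
    rw [map_sum]
    simp only [map_smul, smul_eq_mul, hgoaleq]
    exact Finset.sum_congr rfl fun ℓ _ => mul_comm _ _
  -- upper bound on ∑ F ℓ * lam ℓ from concavity
  have hsupp := concave_support hconc hlam hone (hdiff lam hlam)
  rw [hT] at hsupp
  have hupper : ∑ ℓ, F ℓ * lam ℓ ≤ B + ∑ ℓ, F ℓ := by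
    have h1 : ∑ ℓ, F ℓ * ((fun _ : Fin (n + 1) => (1:ℝ)) - lam) ℓ
        = ∑ ℓ, F ℓ - ∑ ℓ, F ℓ * lam ℓ := by
      rw [← Finset.sum_sub_distrib]
      refine Finset.sum_congr rfl fun ℓ _ => by simp [Pi.sub_apply]; ring
    rw [h1] at hsupp
    linarith
  have hlower : -K₀ * (1 + ∑ ℓ, F ℓ) ≤ ∑ ℓ, F ℓ * lam ℓ := by
    have := hK lam hlam
    simpa only [hgoaleq] using this
  -- abbreviations
  set Sn := ∑ i : Fin n, F i.castSucc with hSn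
  set fτ := F (Fin.last n) with hfτ
  have hsplitF : ∑ ℓ, F ℓ = Sn + fτ := Fin.sum_univ_castSucc F
  have hsplitdot : ∑ ℓ, F ℓ * lam ℓ
      = (∑ i : Fin n, F i.castSucc * lam i.castSucc) + fτ * lam (Fin.last n) :=
    Fin.sum_univ_castSucc (fun ℓ => F ℓ * lam ℓ)
  set P := ∑ i ∈ Finset.univ.filter (fun i : Fin n => i ≠ r),
      F i.castSucc * |lam i.castSucc| with hP
  set Q := ∑ i ∈ Finset.univ.filter (fun i : Fin n => i ≠ r),
      F i.castSucc * lam i.castSucc ^ 2 with hQ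
  have hFpos : ∀ ℓ, 0 < F ℓ := by
    intro ℓ; rw [← hgoaleq]; exact hmono lam hlam ℓ
  have hfτpos : 0 < fτ := hFpos _
  have hSnnonneg : 0 ≤ Sn := Finset.sum_nonneg fun i _ => (hFpos _).le
  have hPnonneg : 0 ≤ P :=
    Finset.sum_nonneg fun i _ => mul_nonneg (hFpos _).le (abs_nonneg _)
  -- splitting a sum over `Fin n` at `r`
  have hsplitr : ∀ g : Fin n → ℝ, ∑ i : Fin n, g i
      = g r + ∑ i ∈ Finset.univ.filter (fun i : Fin n => i ≠ r), g i := by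
    intro g
    rw [← Finset.sum_filter_add_sum_filter_not Finset.univ (fun i : Fin n => i ≠ r) g]
    have : Finset.univ.filter (fun i : Fin n => ¬ i ≠ r) = {r} := by
      ext i; simp [not_not]
    rw [this, Finset.sum_singleton, add_comm]
  -- AM-GM : P ≤ (ε/3) Q + (3/(4 ε)) Sn
  have hPQ : P ≤ ε / 3 * Q + 3 / (4 * ε) * Sn := by
    have h1 : P ≤ ∑ i ∈ Finset.univ.filter (fun i : Fin n => i ≠ r),
        (ε / 3 * (F i.castSucc * lam i.castSucc ^ 2) + 3 / (4 * ε) * F i.castSucc) := by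
      refine Finset.sum_le_sum fun i _ => ?_
      have hF := hFpos i.castSucc
      have habs : |lam i.castSucc| ≤ ε / 3 * lam i.castSucc ^ 2 + 3 / (4 * ε) := by
        have := hgen |lam i.castSucc| (abs_nonneg _)
        rwa [sq_abs] at this
      nlinarith
    rw [Finset.sum_add_distrib, ← Finset.mul_sum, ← Finset.mul_sum] at h1
    have h2 : ∑ i ∈ Finset.univ.filter (fun i : Fin n => i ≠ r), F i.castSucc ≤ Sn := by
      rw [hSn, hsplitr (fun i => F i.castSucc)]
      have := (hFpos r.castSucc).le
      linarith
    have h3 : 0 ≤ 3 / (4 * ε) := by positivity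
    nlinarith
  -- the r-th term
  have hdotr : F r.castSucc * lam r.castSucc
      = (∑ ℓ, F ℓ * lam ℓ) - (∑ i ∈ Finset.univ.filter (fun i : Fin n => i ≠ r),
          F i.castSucc * lam i.castSucc) - fτ * lam (Fin.last n) := by
    rw [hsplitdot, hsplitr (fun i => F i.castSucc * lam i.castSucc)]
    ring
  have habs_sum : |∑ i ∈ Finset.univ.filter (fun i : Fin n => i ≠ r),
      F i.castSucc * lam i.castSucc| ≤ P := by
    refine (Finset.abs_sum_le_sum_abs _ _).trans ?_
    refine Finset.sum_le_sum fun i _ => ?_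
    rw [abs_mul, abs_of_pos (hFpos _)]
  have habs_last : |fτ * lam (Fin.last n)| ≤ B * fτ := by
    rw [abs_mul, abs_of_pos hfτpos, mul_comm]
    exact mul_le_mul_of_nonneg_right hlast hfτpos.le
  have hS' := abs_le.1 habs_sum
  have hL' := abs_le.1 habs_last
  rw [hsplitF] at hlower hupper
  have hK₀prod : 0 ≤ K₀ * (1 + (Sn + fτ)) := mul_nonneg hK₀ (by linarith)
  have hr_bound : F r.castSucc * |lam r.castSucc| ≤
      B + Sn + fτ + K₀ * (1 + (Sn + fτ)) + 2 * P + 2 * (B * fτ) := by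
    have h1 : |F r.castSucc * lam r.castSucc| ≤
        B + Sn + fτ + K₀ * (1 + (Sn + fτ)) + 2 * P + 2 * (B * fτ) := by
      rw [abs_le, hdotr]
      have hBfτ : 0 ≤ B * fτ := mul_nonneg hB hfτpos.le
      constructor
      · linarith [hS'.1, hS'.2, hL'.1, hL'.2, hlower, hPnonneg, hK₀prod]
      · linarith [hS'.1, hS'.2, hL'.1, hL'.2, hupper, hPnonneg, hK₀prod]
    calc F r.castSucc * |lam r.castSucc| = |F r.castSucc * lam r.castSucc| := by
          rw [abs_mul, abs_of_pos (hFpos _)]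
      _ ≤ _ := h1
  -- final assembly
  have hgoal_split : ∑ i : Fin n, F i.castSucc * |lam i.castSucc|
      = F r.castSucc * |lam r.castSucc| + P :=
    hsplitr (fun i => F i.castSucc * |lam i.castSucc|)
  rw [hgoal_split]
  have hc1 : (0:ℝ) ≤ 3 / (4 * ε) := by positivity
  have h3P : 3 * P ≤ ε * Q + 3 * (3 / (4 * ε)) * Sn := by linarith [hPQ]
  linarith [h3P, hr_bound, mul_nonneg hB hSnnonneg, mul_nonneg hc1 hSnnonneg,
    mul_nonneg hc1 hfτpos.le, mul_nonneg hB hfτpos.le, mul_nonneg hK₀ hSnnonneg,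
    mul_nonneg hK₀ hfτpos.le, hSnnonneg, hfτpos.le, hPnonneg, hB, hK₀]
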